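/- (Efficient even-order formula) Let N ≥ 1 and k ≥ 1 be natural numbers and let c ∈ ℝ^N be a nonzero vector with nonnegative coefficients sorted in ascending order 0 ≤ c_1 ≤ … ≤ c_N. Then the Generalised Differential Sparsity of order 2k satisfies S_{2k}(c) = 1 + (1/(N · ‖c‖_{2k}^{2k})) · [ Σ_{ω=1}^{k−1} (−1)^ω · C(2k, ω) · ‖c‖_ω^ω · ‖c‖_{2k−ω}^{2k−ω} + ((−1)^k / 2) · C(2k, k) · (‖c‖_k^k)^2 ], where ‖c‖_ω^ω = Σ_{i=1}^N c_i^ω and C(n, r) denotes the binomial coefficient. -/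

import Mathlib

open Finset

/-- Generalised Differential Sparsity of order `p` (sorted coefficients). -/
noncomputable def gds (N : ℕ) (p : ℝ) (c : Fin N → ℝ) : ℝ :=
  (1 / (N * ∑ i, c i ^ p)) *
    ∑ i : Fin N, ∑ j : Fin N, if i < j then (c j - c i) ^ p else 0

theorem gds_even_formula (N : ℕ) (hN : 1 ≤ N) (k : ℕ) (hk : 1 ≤ k)
    (c : Fin N → ℝ) (hc0 : ∀ i, 0 ≤ c i) (hmono : Monotone c) (hne : c ≠ 0) :
    gds N ((2 * k : ℕ) : ℝ) c =
      1 + (1 / (N * ∑ i, c i ^ (2 * k))) *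
        ((∑ ω ∈ Finset.Ico 1 k, (-1 : ℝ) ^ ω * (Nat.choose (2 * k) ω) *
            (∑ i, c i ^ ω) * (∑ i, c i ^ (2 * k - ω))) +
          ((-1 : ℝ) ^ k / 2) * (Nat.choose (2 * k) k) * (∑ i, c i ^ k) ^ 2) := by
  set S : ℕ → ℝ := fun w => ∑ i, c i ^ w with hS
  set f : ℕ → ℝ := fun m => (-1 : ℝ) ^ m * (Nat.choose (2 * k) m) * S m * S (2 * k - m)
    with hf
  -- positivity of the denominator
  have hNpos : (0 : ℝ) < N := by exact_mod_cast hN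
  have hpos : 0 < S (2 * k) := by
    rw [hS]
    obtain ⟨i0, hi0⟩ := Function.ne_iff.mp hne
    apply Finset.sum_pos' (fun i _ => pow_nonneg (hc0 i) _)
    exact ⟨i0, Finset.mem_univ _, by
      have : 0 < c i0 := lt_of_le_of_ne (hc0 i0) (Ne.symm hi0)
      positivity⟩
  have hD : (N : ℝ) * S (2 * k) ≠ 0 := mul_ne_zero (ne_of_gt hNpos) (ne_of_gt hpos)
  have hsym : ∀ i j : Fin N, (c i - c j) ^ (2 * k) = (c j - c i) ^ (2 * k) := by
    intro i j
    rw [← neg_sub (c j) (c i)]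
    exact Even.neg_pow (even_two_mul k) _
  -- strict triangular sum is half the full sum
  have key : (∑ i : Fin N, ∑ j : Fin N, (c j - c i) ^ (2 * k))
      = 2 * ∑ i : Fin N, ∑ j : Fin N,
          (if i < j then (c j - c i) ^ (2 * k) else 0) := by
    have step1 : (∑ i : Fin N, ∑ j : Fin N, (c j - c i) ^ (2 * k))
        = (∑ i : Fin N, ∑ j : Fin N, (if i < j then (c j - c i) ^ (2 * k) else 0))
          + (∑ i : Fin N, ∑ j : Fin N, (if j < i then (c j - c i) ^ (2 * k) else 0)) := by
      rw [← Finset.sum_add_distrib]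
      refine Finset.sum_congr rfl fun i _ => ?_
      rw [← Finset.sum_add_distrib]
      refine Finset.sum_congr rfl fun j _ => ?_
      rcases lt_trichotomy i j with h | h | h
      · simp [h, not_lt_of_gt h]
      · subst h
        simp [sub_self, zero_pow (show 2 * k ≠ 0 by omega)]
      · simp [h, not_lt_of_gt h]
    have step2 : (∑ i : Fin N, ∑ j : Fin N, (if j < i then (c j - c i) ^ (2 * k) else 0))
        = ∑ i : Fin N, ∑ j : Fin N, (if i < j then (c j - c i) ^ (2 * k) else 0) := by
      rw [Finset.sum_comm]
      refine Finset.sum_congr rfl fun j _ => Finset.sum_congr rfl fun i _ => ?_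
      by_cases h : j < i
      · simp [h, hsym]
      · simp [h]
    rw [step1, step2]; ring
  -- binomial expansion of the full sum
  have expand : (∑ i : Fin N, ∑ j : Fin N, (c j - c i) ^ (2 * k))
      = ∑ m ∈ Finset.range (2 * k + 1), f m := by
    have h1 : ∀ i j : Fin N, (c j - c i) ^ (2 * k)
        = ∑ m ∈ Finset.range (2 * k + 1),
            (-1 : ℝ) ^ m * ((2 * k).choose m) * c j ^ m * c i ^ (2 * k - m) := by
      intro i j
      rw [sub_pow]
      refine Finset.sum_congr rfl fun m _ => ?_
      have hm : (-1 : ℝ) ^ (m + 2 * k) = (-1 : ℝ) ^ m := by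
        rw [pow_add]; simp [pow_mul]
      rw [hm]; ring
    simp only [h1]
    have h2 : ∀ i : Fin N, (∑ j : Fin N, ∑ m ∈ Finset.range (2 * k + 1),
        (-1 : ℝ) ^ m * ((2 * k).choose m) * c j ^ m * c i ^ (2 * k - m))
        = ∑ m ∈ Finset.range (2 * k + 1), ∑ j : Fin N,
        (-1 : ℝ) ^ m * ((2 * k).choose m) * c j ^ m * c i ^ (2 * k - m) :=
      fun i => Finset.sum_comm
    simp only [h2]
    rw [Finset.sum_comm]
    refine Finset.sum_congr rfl fun m _ => ?_
    have h3 : ∀ i : Fin N, (∑ j : Fin N,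
        (-1 : ℝ) ^ m * ((2 * k).choose m) * c j ^ m * c i ^ (2 * k - m))
        = ((-1 : ℝ) ^ m * ((2 * k).choose m) * c i ^ (2 * k - m)) * S m := by
      intro i
      rw [hS, Finset.mul_sum]
      exact Finset.sum_congr rfl fun j _ => by ring
    simp only [h3]
    rw [← Finset.sum_mul, hf, hS]
    rw [show (∑ i : Fin N, (-1 : ℝ) ^ m * ((2 * k).choose m) * c i ^ (2 * k - m))
        = ((-1 : ℝ) ^ m * ((2 * k).choose m)) * ∑ i : Fin N, c i ^ (2 * k - m) by
      rw [Finset.mul_sum]]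
    ring
  -- symmetry of f
  have hfs : ∀ m ∈ Finset.Ico (k + 1) (2 * k), f (2 * k - m) = f m := by
    intro m hm
    rw [Finset.mem_Ico] at hm
    have hmle : m ≤ 2 * k := by omega
    have e1 : 2 * k - (2 * k - m) = m := by omega
    have e2 : (2 * k).choose (2 * k - m) = (2 * k).choose m := Nat.choose_symm hmle
    have e3 : (-1 : ℝ) ^ (2 * k - m) = (-1 : ℝ) ^ m := by
      rcases Nat.even_or_odd m with he | ho
      · rw [he.neg_one_pow, Even.neg_one_pow
          (by rw [Nat.even_sub hmle]; simp [he, even_two_mul k])]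
      · have hodd : Odd (2 * k - m) := by
          obtain ⟨t, ht⟩ := ho
          exact ⟨k - t - 1, by omega⟩
        rw [ho.neg_one_pow, hodd.neg_one_pow]
    simp only [hf]
    rw [e1, e2, e3]
    ring
  -- reindex the upper half
  have hbij : (∑ m ∈ Finset.Ico (k + 1) (2 * k), f m)
      = ∑ m ∈ Finset.Ico 1 k, f m := by
    refine Finset.sum_nbij' (i := fun m => 2 * k - m) (j := fun m => 2 * k - m)
      ?_ ?_ ?_ ?_ ?_
    · intro a ha; simp only [Finset.mem_Ico] at ha ⊢; omega
    · intro a ha; simp only [Finset.mem_Ico] at ha ⊢; omega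
    · intro a ha; simp only [Finset.mem_Ico] at ha; omega
    · intro a ha; simp only [Finset.mem_Ico] at ha; omega
    · intro a ha; exact (hfs a ha).symm
  -- decompose the full range
  have hrange : (∑ m ∈ Finset.range (2 * k + 1), f m)
      = f 0 + f (2 * k) + f k + 2 * ∑ m ∈ Finset.Ico 1 k, f m := by
    rw [Finset.sum_range_succ, Finset.range_eq_Ico,
      Finset.sum_eq_sum_Ico_succ_bot (by omega : 0 < 2 * k),
      ← Finset.sum_Ico_consecutive f (by omega : 0 + 1 ≤ k + 1) (by omega : k + 1 ≤ 2 * k),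
      Finset.sum_Ico_succ_top (by omega : 0 + 1 ≤ k), hbij]
    ring
  -- special values of f
  have hS0 : S 0 = (N : ℝ) := by
    rw [hS]; simp
  have hf0 : f 0 = (N : ℝ) * S (2 * k) := by
    rw [hf]; simp [hS0]
  have hf2k : f (2 * k) = (N : ℝ) * S (2 * k) := by
    rw [hf]
    simp [hS0, even_two_mul k, Even.neg_one_pow]
    ring
  have hfk : f k = (-1 : ℝ) ^ k * ((2 * k).choose k) * (S k) ^ 2 := by
    simp only [hf]
    rw [show 2 * k - k = k by omega]
    ring
  -- assemble
  have tri : (∑ i : Fin N, ∑ j : Fin N, (if i < j then (c j - c i) ^ (2 * k) else 0))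
      = (∑ m ∈ Finset.range (2 * k + 1), f m) / 2 := by
    rw [← expand, key]; ring
  unfold gds
  simp only [Real.rpow_natCast]
  have hSk : (∑ i : Fin N, c i ^ k) = S k := rfl
  have hS2k : (∑ i : Fin N, c i ^ (2 * k)) = S (2 * k) := rfl
  rw [tri, hrange, hf0, hf2k, hfk, hSk, hS2k]
  have hN0 : (N : ℝ) ≠ 0 := ne_of_gt hNpos
  field_simp
  ring
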